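/- Let E be a nonzero reflexive Banach space and S : E ⇉ E* be maximally monotone. Then (S + J)(E) = E*, i.e. for every y* ∈ E* there exists x ∈ E with y* ∈ Sx + Jx, where J is the duality map. -/

import Mathlib

open scoped Pointwise

noncomputable section

variable {E : Type*} [NormedAddCommGroup E] [NormedSpace ℝ E]

/-- `E` is reflexive: the canonical map into the double dual is surjective. -/
def ReflexiveSp (E : Type*) [NormedAddCommGroup E] [NormedSpace ℝ E] : Prop :=
  Function.Surjective (NormedSpace.inclusionInDoubleDual ℝ E)

/-- The SSD pairing `⌊(x,x*),(y,y*)⌋ = ⟨x,y*⟩ + ⟨y,x*⟩` on `E × E*`. -/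
def pairP (p r : E × StrongDual ℝ E) : ℝ := r.2 p.1 + p.2 r.1

/-- `q(x,x*) = ⟨x,x*⟩`. -/
def qP (p : E × StrongDual ℝ E) : ℝ := p.2 p.1

/-- The intrinsic conjugate `f^@(c) = sup_b (⌊b,c⌋ - f(b))` on `E × E*`. -/
def conjP (f : E × StrongDual ℝ E → EReal) (c : E × StrongDual ℝ E) : EReal :=
  ⨆ b : E × StrongDual ℝ E, ((pairP b c : ℝ) : EReal) - f b

/-- A proper function into `(-∞,∞]`: never `⊥` and somewhere finite. -/
def ProperFnP (f : E × StrongDual ℝ E → EReal) : Prop :=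
  (∀ p, f p ≠ ⊥) ∧ ∃ p, f p ≠ ⊤

/-- Convexity for `(-∞,∞]`-valued functions on `E × E*`. -/
def ConvexFnP (f : E × StrongDual ℝ E → EReal) : Prop :=
  ∀ p r : E × StrongDual ℝ E, ∀ t : ℝ, 0 ≤ t → t ≤ 1 →
    f (t • p + (1 - t) • r) ≤ (t : EReal) * f p + ((1 - t : ℝ) : EReal) * f r

/-- `P_q(f) = {b : f(b) = q(b)}`. -/
def PqP (f : E × StrongDual ℝ E → EReal) : Set (E × StrongDual ℝ E) :=
  {p | f p = ((qP p : ℝ) : EReal)}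

/-- `f` is a BC-function: `f^@(b) ≥ f(b) ≥ q(b)` for all `b`. -/
def IsBCP (f : E × StrongDual ℝ E → EReal) : Prop :=
  ∀ p : E × StrongDual ℝ E, ((qP p : ℝ) : EReal) ≤ f p ∧ f p ≤ conjP f p

/-- The effective domain of an `EReal`-valued function on `E × E*`. -/
def domP (f : E × StrongDual ℝ E → EReal) : Set (E × StrongDual ℝ E) :=
  {p | ∃ r : ℝ, f p = (r : EReal)}

/-- A monotone subset of `E × E*`. -/
def MonoSet (A : Set (E × StrongDual ℝ E)) : Prop :=
  ∀ p ∈ A, ∀ r ∈ A, 0 ≤ (p.2 - r.2) (p.1 - r.1)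

/-- A maximally monotone subset of `E × E*`. -/
def MaxMono (A : Set (E × StrongDual ℝ E)) : Prop :=
  A.Nonempty ∧ MonoSet A ∧ ∀ C : Set (E × StrongDual ℝ E), MonoSet C → A ⊆ C → C = A

/-- `G(-J) = {(x,x*) : ½‖x‖² + ½‖x*‖² = -⟨x,x*⟩}` where `J` is the duality map. -/
def GnegJ (E : Type*) [NormedAddCommGroup E] [NormedSpace ℝ E] :
    Set (E × StrongDual ℝ E) :=
  {p | (1 / 2) * ‖p.1‖ ^ 2 + (1 / 2) * ‖p.2‖ ^ 2 = -(p.2 p.1)}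

/-- The graph of a multifunction `S : E ⇉ E*`. -/
def graphOf (S : E → Set (StrongDual ℝ E)) : Set (E × StrongDual ℝ E) :=
  {p | p.2 ∈ S p.1}

/-- `S : E ⇉ E*` is maximally monotone. -/
def MaxMonoOp (S : E → Set (StrongDual ℝ E)) : Prop := MaxMono (graphOf S)

/-- The Fitzpatrick function of a multifunction `S : E ⇉ E*`:
`φ_S(x,x*) = sup_{(s,s*) ∈ G(S)} (⟨x,s*⟩ + ⟨s,x*⟩ - ⟨s,s*⟩)`. -/
def fitz (S : E → Set (StrongDual ℝ E)) (p : E × StrongDual ℝ E) : EReal :=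
  ⨆ s : graphOf S,
    (((s : E × StrongDual ℝ E).2 p.1 + p.2 (s : E × StrongDual ℝ E).1
      - (s : E × StrongDual ℝ E).2 (s : E × StrongDual ℝ E).1 : ℝ) : EReal)

/-- The domain `D(S) = {x : Sx ≠ ∅}` of a multifunction. -/
def domOp (S : E → Set (StrongDual ℝ E)) : Set E := {x | (S x).Nonempty}


namespace S16

open NormedSpace

/-- `h(x,x*) = ‖x‖²/2 + ‖x*‖²/2`. -/
def hB (b : E × StrongDual ℝ E) : ℝ := ‖b.1‖ ^ 2 / 2 + ‖b.2‖ ^ 2 / 2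

lemma hB_nonneg (b : E × StrongDual ℝ E) : 0 ≤ hB b := by
  unfold hB; positivity

lemma q_ge (b : E × StrongDual ℝ E) : -(hB b) ≤ b.2 b.1 := by
  have h1 : |b.2 b.1| ≤ ‖b.2‖ * ‖b.1‖ := by
    have := b.2.le_opNorm b.1
    rwa [Real.norm_eq_abs] at this
  have h2 := abs_le.1 h1
  unfold hB
  nlinarith [sq_nonneg (‖b.1‖ - ‖b.2‖)]

lemma mono_pair {A : Set (E × StrongDual ℝ E)} (hm : MonoSet A)
    {a a' : E × StrongDual ℝ E} (ha : a ∈ A) (ha' : a' ∈ A) :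
    a.2 a'.1 + a'.2 a.1 - a.2 a.1 ≤ a'.2 a'.1 := by
  have := hm a ha a' ha'
  simp only [ContinuousLinearMap.sub_apply, map_sub] at this
  linarith

/-- the set whose `sInf` is the inf-convolution `p(b) = inf_{b'} (φ_A(b') + h(b'+b))`. -/
def PS (A : Set (E × StrongDual ℝ E)) (b : E × StrongDual ℝ E) : Set ℝ :=
  {r | ∃ b' : E × StrongDual ℝ E, ∀ a ∈ A, a.2 b'.1 + b'.2 a.1 - a.2 a.1 + hB (b' + b) ≤ r}

def pF (A : Set (E × StrongDual ℝ E)) (b : E × StrongDual ℝ E) : ℝ := sInf (PS A b)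

lemma mem_PS {A : Set (E × StrongDual ℝ E)} (hm : MonoSet A) {a₀ : E × StrongDual ℝ E} (h₀ : a₀ ∈ A)
    (b : E × StrongDual ℝ E) : a₀.2 a₀.1 + hB (a₀ + b) ∈ PS A b :=
  ⟨a₀, fun a ha => by have := mono_pair hm ha h₀; linarith⟩

lemma PS_lb {A : Set (E × StrongDual ℝ E)} {a₀ : E × StrongDual ℝ E} (h₀ : a₀ ∈ A)
    (b : E × StrongDual ℝ E) {r : ℝ} (hr : r ∈ PS A b) :
    -(|a₀.2 a₀.1| + ‖a₀.2‖ * ‖b.1‖ + ‖a₀.2‖ ^ 2 / 2 + ‖a₀.1‖ * ‖b.2‖ + ‖a₀.1‖ ^ 2 / 2) ≤ r := by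
  obtain ⟨b', hb'⟩ := hr
  have H := hb' a₀ h₀
  have e1 : -(‖a₀.2‖ * ‖b'.1‖) ≤ a₀.2 b'.1 := by
    have h1 : |a₀.2 b'.1| ≤ ‖a₀.2‖ * ‖b'.1‖ := by
      have := a₀.2.le_opNorm b'.1; rwa [Real.norm_eq_abs] at this
    linarith [(abs_le.1 h1).1]
  have e2 : -(‖b'.2‖ * ‖a₀.1‖) ≤ b'.2 a₀.1 := by
    have h1 : |b'.2 a₀.1| ≤ ‖b'.2‖ * ‖a₀.1‖ := by
      have := b'.2.le_opNorm a₀.1; rwa [Real.norm_eq_abs] at this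
    linarith [(abs_le.1 h1).1]
  have e3 : -|a₀.2 a₀.1| ≤ -(a₀.2 a₀.1) := by
    have := le_abs_self (a₀.2 a₀.1); linarith
  have n1 : ‖b'.1‖ - ‖b.1‖ ≤ ‖(b' + b).1‖ := by
    have := norm_le_add_norm_add b'.1 b.1
    simp only [Prod.fst_add]; linarith
  have n1' : ‖b.1‖ - ‖b'.1‖ ≤ ‖(b' + b).1‖ := by
    have := norm_le_add_norm_add' b'.1 b.1
    simp only [Prod.fst_add]; linarith
  have n2 : ‖b'.2‖ - ‖b.2‖ ≤ ‖(b' + b).2‖ := by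
    have := norm_le_add_norm_add b'.2 b.2
    simp only [Prod.snd_add]; linarith
  have n2' : ‖b.2‖ - ‖b'.2‖ ≤ ‖(b' + b).2‖ := by
    have := norm_le_add_norm_add' b'.2 b.2
    simp only [Prod.snd_add]; linarith
  have hq1 : (‖b'.1‖ - ‖b.1‖) ^ 2 ≤ ‖(b' + b).1‖ ^ 2 := by
    nlinarith [norm_nonneg (b' + b).1]
  have hq2 : (‖b'.2‖ - ‖b.2‖) ^ 2 ≤ ‖(b' + b).2‖ ^ 2 := by
    nlinarith [norm_nonneg (b' + b).2]
  have hhb : (‖b'.1‖ - ‖b.1‖) ^ 2 / 2 + (‖b'.2‖ - ‖b.2‖) ^ 2 / 2 ≤ hB (b' + b) := by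
    unfold hB; linarith
  nlinarith [sq_nonneg (‖b'.1‖ - ‖b.1‖ - ‖a₀.2‖), sq_nonneg (‖b'.2‖ - ‖b.2‖ - ‖a₀.1‖)]

lemma PS_nonempty {A : Set (E × StrongDual ℝ E)} (hm : MonoSet A) {a₀ : E × StrongDual ℝ E} (h₀ : a₀ ∈ A)
    (b : E × StrongDual ℝ E) : (PS A b).Nonempty := ⟨_, mem_PS hm h₀ b⟩

lemma PS_bdd {A : Set (E × StrongDual ℝ E)} {a₀ : E × StrongDual ℝ E} (h₀ : a₀ ∈ A)
    (b : E × StrongDual ℝ E) : BddBelow (PS A b) := ⟨_, fun r hr => PS_lb h₀ b hr⟩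

lemma pF_le {A : Set (E × StrongDual ℝ E)} {a₀ : E × StrongDual ℝ E} (h₀ : a₀ ∈ A)
    {b : E × StrongDual ℝ E} {r : ℝ} (hr : r ∈ PS A b) : pF A b ≤ r :=
  csInf_le (PS_bdd h₀ b) hr

lemma pF_le_of_mem {A : Set (E × StrongDual ℝ E)} (hm : MonoSet A) {a₀ : E × StrongDual ℝ E} (h₀ : a₀ ∈ A)
    (b : E × StrongDual ℝ E) : pF A b ≤ a₀.2 a₀.1 + hB (a₀ + b) :=
  pF_le h₀ (mem_PS hm h₀ b)

lemma pF_sub_le {A : Set (E × StrongDual ℝ E)} (hm : MonoSet A) {a₀ : E × StrongDual ℝ E} (h₀ : a₀ ∈ A)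
    {a : E × StrongDual ℝ E} (ha : a ∈ A) (b : E × StrongDual ℝ E) :
    pF A (b - a) ≤ a.2 a.1 + hB b := by
  refine pF_le h₀ ⟨a, fun a' ha' => ?_⟩
  have := mono_pair hm ha' ha
  have : a + (b - a) = b := by abel
  rw [this]
  have := mono_pair hm ha' ha
  linarith

lemma sq_convex {θ a b c : ℝ} (h0 : 0 ≤ θ) (h1 : θ ≤ 1) (ha : 0 ≤ c)
    (hc : c ≤ θ * a + (1 - θ) * b) (hA : 0 ≤ a) (hB' : 0 ≤ b) :
    c ^ 2 ≤ θ * a ^ 2 + (1 - θ) * b ^ 2 := by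
  nlinarith [mul_nonneg (mul_nonneg h0 (by linarith : (0:ℝ) ≤ 1 - θ)) (sq_nonneg (a - b))]

lemma hB_convex {θ : ℝ} (h0 : 0 ≤ θ) (h1 : θ ≤ 1) (u v : E × StrongDual ℝ E) :
    hB (θ • u + (1 - θ) • v) ≤ θ * hB u + (1 - θ) * hB v := by
  have k1 : ‖(θ • u + (1 - θ) • v).1‖ ≤ θ * ‖u.1‖ + (1 - θ) * ‖v.1‖ := by
    simp only [Prod.fst_add, Prod.smul_fst]
    calc ‖θ • u.1 + (1 - θ) • v.1‖ ≤ ‖θ • u.1‖ + ‖(1 - θ) • v.1‖ := norm_add_le _ _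
      _ = θ * ‖u.1‖ + (1 - θ) * ‖v.1‖ := by
          rw [norm_smul, norm_smul, Real.norm_eq_abs, Real.norm_eq_abs,
            abs_of_nonneg h0, abs_of_nonneg (by linarith : (0:ℝ) ≤ 1 - θ)]
  have k2 : ‖(θ • u + (1 - θ) • v).2‖ ≤ θ * ‖u.2‖ + (1 - θ) * ‖v.2‖ := by
    simp only [Prod.snd_add, Prod.smul_snd]
    calc ‖θ • u.2 + (1 - θ) • v.2‖ ≤ ‖θ • u.2‖ + ‖(1 - θ) • v.2‖ := norm_add_le _ _
      _ = θ * ‖u.2‖ + (1 - θ) * ‖v.2‖ := by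
          rw [norm_smul, norm_smul, Real.norm_eq_abs, Real.norm_eq_abs,
            abs_of_nonneg h0, abs_of_nonneg (by linarith : (0:ℝ) ≤ 1 - θ)]
  have q1 := sq_convex h0 h1 (norm_nonneg _) k1 (norm_nonneg u.1) (norm_nonneg v.1)
  have q2 := sq_convex h0 h1 (norm_nonneg _) k2 (norm_nonneg u.2) (norm_nonneg v.2)
  unfold hB; linarith

lemma PS_convex {A : Set (E × StrongDual ℝ E)} {θ : ℝ} (h0 : 0 ≤ θ) (h1 : θ ≤ 1)
    {b c : E × StrongDual ℝ E} {r r' : ℝ} (hr : r ∈ PS A b) (hr' : r' ∈ PS A c) :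
    θ * r + (1 - θ) * r' ∈ PS A (θ • b + (1 - θ) • c) := by
  obtain ⟨b₁, hb₁⟩ := hr
  obtain ⟨b₂, hb₂⟩ := hr'
  refine ⟨θ • b₁ + (1 - θ) • b₂, fun a ha => ?_⟩
  have key : θ • b₁ + (1 - θ) • b₂ + (θ • b + (1 - θ) • c)
      = θ • (b₁ + b) + (1 - θ) • (b₂ + c) := by module
  rw [key]
  have hcv := hB_convex h0 h1 (b₁ + b) (b₂ + c)
  have e1 : a.2 (θ • b₁ + (1 - θ) • b₂).1 = θ * a.2 b₁.1 + (1 - θ) * a.2 b₂.1 := by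
    simp only [Prod.fst_add, Prod.smul_fst, map_add, map_smul, smul_eq_mul]
  have e2 : (θ • b₁ + (1 - θ) • b₂).2 a.1 = θ * b₁.2 a.1 + (1 - θ) * b₂.2 a.1 := by
    simp only [Prod.snd_add, Prod.smul_snd, ContinuousLinearMap.add_apply,
      ContinuousLinearMap.smul_apply, smul_eq_mul]
  have H1 := hb₁ a ha
  have H2 := hb₂ a ha
  rw [e1, e2]
  nlinarith [mul_le_mul_of_nonneg_left H1 h0,
    mul_le_mul_of_nonneg_left H2 (by linarith : (0:ℝ) ≤ 1 - θ)]

lemma my_le_of_forall_pos {a b : ℝ} (h : ∀ ε : ℝ, 0 < ε → a ≤ b + ε) : a ≤ b := by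
  by_contra h'
  push_neg at h'
  have := h ((a - b) / 2) (by linarith)
  linarith

lemma pF_convex {A : Set (E × StrongDual ℝ E)} {a₀ : E × StrongDual ℝ E} (h₀ : a₀ ∈ A)
    (hm : MonoSet A) {θ : ℝ} (h0 : 0 ≤ θ) (h1 : θ ≤ 1) (b c : E × StrongDual ℝ E) :
    pF A (θ • b + (1 - θ) • c) ≤ θ * pF A b + (1 - θ) * pF A c := by
  refine my_le_of_forall_pos fun ε hε => ?_
  obtain ⟨r, hr, hrlt⟩ := (csInf_lt_iff (PS_bdd h₀ b) (PS_nonempty hm h₀ b)).1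
    (show pF A b < pF A b + ε by unfold pF at *; linarith)
  obtain ⟨r', hr', hrlt'⟩ := (csInf_lt_iff (PS_bdd h₀ c) (PS_nonempty hm h₀ c)).1
    (show pF A c < pF A c + ε by unfold pF at *; linarith)
  have := pF_le h₀ (PS_convex h0 h1 hr hr')
  nlinarith
lemma pF_zero_nonneg {A : Set (E × StrongDual ℝ E)} (hA : MaxMono A) : 0 ≤ pF A 0 := by
  obtain ⟨⟨a₀, h₀⟩, hm, hmax⟩ := hA
  refine le_csInf (PS_nonempty hm h₀ 0) fun r hr => ?_
  by_contra hneg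
  push_neg at hneg
  obtain ⟨b', hb'⟩ := hr
  have H : ∀ a ∈ A, a.2 b'.1 + b'.2 a.1 - a.2 a.1 + hB b' ≤ r := by
    intro a ha; have := hb' a ha; rwa [add_zero] at this
  have hbmem : b' ∈ A := by
    have hC : MonoSet (insert b' A) := by
      intro p hp q hq
      rcases Set.mem_insert_iff.mp hp with rfl | hp' <;>
        rcases Set.mem_insert_iff.mp hq with rfl | hq'
      · simp
      · have := H q hq'
        have hq2 := q_ge p
        simp only [ContinuousLinearMap.sub_apply, map_sub]
        linarith
      · have := H p hp'
        have hq2 := q_ge q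
        simp only [ContinuousLinearMap.sub_apply, map_sub]
        linarith
      · exact hm p hp' q hq'
    have := hmax (insert b' A) hC (Set.subset_insert _ _)
    rw [← this]; exact Set.mem_insert _ _
  have := H b' hbmem
  have := q_ge b'
  linarith

lemma pF_two_scale {A : Set (E × StrongDual ℝ E)} (hA : MaxMono A)
    {t s : ℝ} (ht : 0 < t) (hs : 0 < s) (b : E × StrongDual ℝ E) :
    0 ≤ pF A (t • b) / t + pF A (s • (-b)) / s := by
  obtain ⟨⟨a₀, h₀⟩, hm, _⟩ := id hA
  have hθ0 : 0 ≤ s / (t + s) := by positivity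
  have hθ1 : s / (t + s) ≤ 1 := by
    rw [div_le_one (by linarith)]; linarith
  have hcomb : (s / (t + s)) • (t • b) + (1 - s / (t + s)) • (s • (-b)) = (0 : E × StrongDual ℝ E) := by
    have h1 : (1 : ℝ) - s / (t + s) = t / (t + s) := by field_simp; ring
    rw [h1, smul_smul, smul_smul]
    have : s / (t + s) * t = t / (t + s) * s := by ring
    rw [smul_neg, this]
    exact add_neg_cancel _
  have hcv := pF_convex h₀ hm hθ0 hθ1 (t • b) (s • (-b))
  rw [hcomb] at hcv
  have h0 := pF_zero_nonneg hA
  have h1 : (1 : ℝ) - s / (t + s) = t / (t + s) := by field_simp; ring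
  rw [h1] at hcv
  set X := pF A (t • b)
  set Y := pF A (s • (-b))
  have key : 0 ≤ s * X + t * Y := by
    have hts : 0 < t + s := by linarith
    have := hcv
    have h2 : 0 ≤ s / (t + s) * X + t / (t + s) * Y := le_trans h0 this
    calc (0:ℝ) = (t + s) * 0 := by ring
      _ ≤ (t + s) * (s / (t + s) * X + t / (t + s) * Y) :=
        mul_le_mul_of_nonneg_left h2 (le_of_lt hts)
      _ = s * X + t * Y := by field_simp
  have : X / t + Y / s = (s * X + t * Y) / (t * s) := by field_simp
  rw [this]
  positivity
/-- The set defining the sublinear minorant generator. -/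
def RS (A : Set (E × StrongDual ℝ E)) (b : E × StrongDual ℝ E) : Set ℝ :=
  {c | ∃ t : ℝ, 0 < t ∧ c = pF A (t • b) / t}

def rF (A : Set (E × StrongDual ℝ E)) (b : E × StrongDual ℝ E) : ℝ := sInf (RS A b)

lemma RS_nonempty (A : Set (E × StrongDual ℝ E)) (b : E × StrongDual ℝ E) : (RS A b).Nonempty :=
  ⟨pF A ((1:ℝ) • b) / 1, 1, one_pos, rfl⟩

lemma RS_bdd {A : Set (E × StrongDual ℝ E)} (hA : MaxMono A) (b : E × StrongDual ℝ E) :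
    BddBelow (RS A b) := by
  refine ⟨-(pF A ((1:ℝ) • (-b)) / 1), fun c hc => ?_⟩
  obtain ⟨t, ht, rfl⟩ := hc
  have := pF_two_scale hA ht one_pos b
  linarith

lemma rF_le_pF {A : Set (E × StrongDual ℝ E)} (hA : MaxMono A) (b : E × StrongDual ℝ E) :
    rF A b ≤ pF A b := by
  have : pF A b ∈ RS A b := ⟨1, one_pos, by rw [one_smul, div_one]⟩
  exact csInf_le (RS_bdd hA b) this

lemma rF_zero_nonneg {A : Set (E × StrongDual ℝ E)} (hA : MaxMono A) : 0 ≤ rF A 0 := by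
  refine le_csInf (RS_nonempty A 0) fun c hc => ?_
  obtain ⟨t, ht, rfl⟩ := hc
  rw [smul_zero]
  exact div_nonneg (pF_zero_nonneg hA) ht.le

lemma rF_smul {A : Set (E × StrongDual ℝ E)} (hA : MaxMono A) {c : ℝ} (hc : 0 < c)
    (b : E × StrongDual ℝ E) : rF A (c • b) = c * rF A b := by
  have hset : RS A (c • b) = (fun z => c * z) '' RS A b := by
    ext x
    constructor
    · rintro ⟨t, ht, rfl⟩
      exact ⟨pF A ((t * c) • b) / (t * c), ⟨t * c, mul_pos ht hc, rfl⟩, by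
        rw [smul_smul]; field_simp⟩
    · rintro ⟨z, ⟨s, hs, rfl⟩, rfl⟩
      refine ⟨s / c, div_pos hs hc, ?_⟩
      rw [smul_smul, div_mul_cancel₀ _ (ne_of_gt hc)]
      field_simp
  rw [rF, hset]
  have himg : (fun z => c * z) '' RS A b = c • RS A b := by
    rw [← Set.image_smul]; rfl
  rw [himg, Real.sInf_smul_of_nonneg hc.le]
  rfl
lemma rF_subadd {A : Set (E × StrongDual ℝ E)} (hA : MaxMono A) (b c : E × StrongDual ℝ E) :
    rF A (b + c) ≤ rF A b + rF A c := by
  obtain ⟨⟨a₀, h₀⟩, hm, _⟩ := id hA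
  refine my_le_of_forall_pos fun ε hε => ?_
  obtain ⟨X, hX, hXlt⟩ := (csInf_lt_iff (RS_bdd hA b) (RS_nonempty A b)).1
    (show rF A b < rF A b + ε / 2 by linarith)
  obtain ⟨Y, hY, hYlt⟩ := (csInf_lt_iff (RS_bdd hA c) (RS_nonempty A c)).1
    (show rF A c < rF A c + ε / 2 by linarith)
  obtain ⟨t, ht, rfl⟩ := hX
  obtain ⟨s, hs, rfl⟩ := hY
  set u : ℝ := t * s / (t + s) with hu
  have hts : 0 < t + s := by linarith
  have hupos : 0 < u := by positivity
  have hθ0 : 0 ≤ s / (t + s) := by positivity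
  have hθ1 : s / (t + s) ≤ 1 := by rw [div_le_one hts]; linarith
  have h1 : (1 : ℝ) - s / (t + s) = t / (t + s) := by field_simp; ring
  have hcomb : (s / (t + s)) • (t • b) + (1 - s / (t + s)) • (s • c) = u • (b + c) := by
    rw [h1, smul_smul, smul_smul, smul_add]
    have e1 : s / (t + s) * t = u := by rw [hu]; ring
    have e2 : t / (t + s) * s = u := by rw [hu]; ring
    rw [e1, e2]
  have hcv := pF_convex h₀ hm hθ0 hθ1 (t • b) (s • c)
  rw [hcomb, h1] at hcv
  have hmem : pF A (u • (b + c)) / u ∈ RS A (b + c) := ⟨u, hupos, rfl⟩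
  have hle := csInf_le (RS_bdd hA (b + c)) hmem
  have e1 : s / (t + s) * pF A (t • b) = u * (pF A (t • b) / t) := by
    rw [hu]; field_simp
  have e2 : t / (t + s) * pF A (s • c) = u * (pF A (s • c) / s) := by
    rw [hu]; field_simp
  have hdiv : pF A (u • (b + c)) / u ≤ pF A (t • b) / t + pF A (s • c) / s := by
    rw [div_le_iff₀ hupos]
    calc pF A (u • (b + c))
        ≤ u * (pF A (t • b) / t) + u * (pF A (s • c) / s) := by rw [← e1, ← e2]; exact hcv
      _ = (pF A (t • b) / t + pF A (s • c) / s) * u := by ring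
  calc rF A (b + c) ≤ pF A (u • (b + c)) / u := hle
    _ ≤ pF A (t • b) / t + pF A (s • c) / s := hdiv
    _ ≤ (rF A b + ε / 2) + (rF A c + ε / 2) := by linarith
    _ = rF A b + rF A c + ε := by ring

/-- Hahn–Banach applied below the sublinear functional `rF`. -/
lemma exists_linear_le_pF {A : Set (E × StrongDual ℝ E)} (hA : MaxMono A) :
    ∃ g : (E × StrongDual ℝ E) →ₗ[ℝ] ℝ, ∀ b, g b ≤ pF A b := by
  obtain ⟨g, -, hg⟩ := exists_extension_of_le_sublinear
    ((0 : (E × StrongDual ℝ E) →ₗ[ℝ] ℝ).toPMap ⊥) (rF A)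
    (fun cc hcc x => rF_smul hA hcc x)
    (fun x y => rF_subadd hA x y)
    (fun x => by
      change (0 : ℝ) ≤ rF A (x : E × StrongDual ℝ E)
      have hx : (x : E × StrongDual ℝ E) = 0 := (Submodule.mem_bot ℝ).mp x.2
      rw [hx]
      exact rF_zero_nonneg hA)
  exact ⟨g, fun b => le_trans (hg b) (rF_le_pF hA b)⟩

lemma sq_mono_of_le {a b : ℝ} (ha : 0 ≤ a) (h : a ≤ b) : a ^ 2 ≤ b ^ 2 := by nlinarith

lemma g_repr {A : Set (E × StrongDual ℝ E)} (hA : MaxMono A) (hrefl : ReflexiveSp E)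
    {g : (E × StrongDual ℝ E) →ₗ[ℝ] ℝ} (hg : ∀ b, g b ≤ pF A b) :
    ∃ yst : StrongDual ℝ E, ∃ y : E, ∀ v vs, g (v, vs) = yst v + vs y := by
  obtain ⟨⟨a₀, h₀⟩, hm, -⟩ := id hA
  set C : ℝ := |a₀.2 a₀.1| + (‖a₀.1‖ + 1) ^ 2 / 2 + (‖a₀.2‖ + 1) ^ 2 / 2 with hC
  have hCpos : 0 ≤ C := by positivity
  -- bound on the unit "ball" of each factor
  have hub : ∀ b : E × StrongDual ℝ E, ‖b.1‖ ≤ 1 → ‖b.2‖ ≤ 1 → g b ≤ C := by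
    intro b h1 h2
    have h3 := le_trans (hg b) (pF_le_of_mem hm h₀ b)
    have h4 : ‖(a₀ + b).1‖ ≤ ‖a₀.1‖ + 1 := by
      simp only [Prod.fst_add]
      calc ‖a₀.1 + b.1‖ ≤ ‖a₀.1‖ + ‖b.1‖ := norm_add_le _ _
        _ ≤ ‖a₀.1‖ + 1 := by linarith
    have h5 : ‖(a₀ + b).2‖ ≤ ‖a₀.2‖ + 1 := by
      simp only [Prod.snd_add]
      calc ‖a₀.2 + b.2‖ ≤ ‖a₀.2‖ + ‖b.2‖ := norm_add_le _ _
        _ ≤ ‖a₀.2‖ + 1 := by linarith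
    have h6 := sq_mono_of_le (norm_nonneg (a₀ + b).1) h4
    have h7 := sq_mono_of_le (norm_nonneg (a₀ + b).2) h5
    have h8 := le_abs_self (a₀.2 a₀.1)
    unfold hB at h3
    rw [hC]
    linarith
  -- componentwise bounds
  have habs1 : ∀ x : E, |g (x, 0)| ≤ C * ‖x‖ := by
    intro x
    rcases eq_or_ne x 0 with rfl | hx
    · simp only [norm_zero, mul_zero]
      have : ((0 : E), (0 : StrongDual ℝ E)) = (0 : E × StrongDual ℝ E) := rfl
      rw [this, map_zero, abs_zero]
    · have hxn : 0 < ‖x‖ := norm_pos_iff.mpr hx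
      have hz : ‖(‖x‖⁻¹ • x : E)‖ ≤ 1 := by
        rw [norm_smul, norm_inv, norm_norm, inv_mul_cancel₀ (ne_of_gt hxn)]
      have hsm : ∀ w : E, g (w, 0) = g ((1 : ℝ) • (w, (0 : StrongDual ℝ E))) := by
        intro w; rw [one_smul]
      have key : ∀ w : E, ‖w‖ ≤ 1 → |g (w, 0)| ≤ C := by
        intro w hw
        have p1 := hub (w, 0) (by simpa using hw) (by simp)
        have p2 := hub (-w, 0) (by simpa using hw) (by simp)
        have hneg : ((-w : E), (0 : StrongDual ℝ E)) = -((w : E), (0 : StrongDual ℝ E)) := by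
          simp [Prod.neg_mk]
        rw [hneg, map_neg] at p2
        rw [abs_le]; constructor <;> linarith
      have hdecomp : ((x : E), (0 : StrongDual ℝ E)) = ‖x‖ • ((‖x‖⁻¹ • x : E), (0 : StrongDual ℝ E)) := by
        rw [Prod.smul_mk, smul_smul, mul_inv_cancel₀ (ne_of_gt hxn), one_smul, smul_zero]
      rw [hdecomp, map_smul, smul_eq_mul, abs_mul, abs_of_nonneg (norm_nonneg x), mul_comm]
      exact mul_le_mul_of_nonneg_right (key _ hz) (norm_nonneg x)
  have habs2 : ∀ xs : StrongDual ℝ E, |g (0, xs)| ≤ C * ‖xs‖ := by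
    intro xs
    rcases eq_or_ne xs 0 with rfl | hx
    · simp only [norm_zero, mul_zero]
      have : ((0 : E), (0 : StrongDual ℝ E)) = (0 : E × StrongDual ℝ E) := rfl
      rw [this, map_zero, abs_zero]
    · have hxn : 0 < ‖xs‖ := norm_pos_iff.mpr hx
      have hz : ‖(‖xs‖⁻¹ • xs : StrongDual ℝ E)‖ ≤ 1 := by
        rw [norm_smul, norm_inv, norm_norm, inv_mul_cancel₀ (ne_of_gt hxn)]
      have key : ∀ w : StrongDual ℝ E, ‖w‖ ≤ 1 → |g (0, w)| ≤ C := by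
        intro w hw
        have p1 := hub (0, w) (by simp) (by simpa using hw)
        have p2 := hub (0, -w) (by simp) (by simpa using hw)
        have hneg : ((0 : E), (-w : StrongDual ℝ E)) = -((0 : E), (w : StrongDual ℝ E)) := by
          simp [Prod.neg_mk]
        rw [hneg, map_neg] at p2
        rw [abs_le]; constructor <;> linarith
      have hdecomp : ((0 : E), (xs : StrongDual ℝ E)) = ‖xs‖ • ((0 : E), (‖xs‖⁻¹ • xs : StrongDual ℝ E)) := by
        rw [Prod.smul_mk, smul_smul, mul_inv_cancel₀ (ne_of_gt hxn), one_smul, smul_zero]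
      rw [hdecomp, map_smul, smul_eq_mul, abs_mul, abs_of_nonneg (norm_nonneg xs), mul_comm]
      exact mul_le_mul_of_nonneg_right (key _ hz) (norm_nonneg xs)
  -- bundle the two components
  set ψ₁ : E →ₗ[ℝ] ℝ := g ∘ₗ LinearMap.inl ℝ E (StrongDual ℝ E) with hψ₁
  set ψ₂ : StrongDual ℝ E →ₗ[ℝ] ℝ := g ∘ₗ LinearMap.inr ℝ E (StrongDual ℝ E) with hψ₂
  have hψ₁b : ∀ x, ‖ψ₁ x‖ ≤ C * ‖x‖ := by
    intro x; rw [Real.norm_eq_abs]; exact habs1 x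
  have hψ₂b : ∀ xs, ‖ψ₂ xs‖ ≤ C * ‖xs‖ := by
    intro xs; rw [Real.norm_eq_abs]; exact habs2 xs
  set yst : StrongDual ℝ E := ψ₁.mkContinuous C hψ₁b with hyst
  set Ψ : StrongDual ℝ (StrongDual ℝ E) := ψ₂.mkContinuous C hψ₂b with hΨ
  obtain ⟨y, hy⟩ := hrefl Ψ
  refine ⟨yst, y, fun v vs => ?_⟩
  have hvy : vs y = g (0, vs) := by
    have h1 : NormedSpace.inclusionInDoubleDual ℝ E y vs = vs y := NormedSpace.dual_def ℝ E y vs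
    rw [← h1, hy]
    rfl
  have hsplit : ((v : E), (vs : StrongDual ℝ E)) = (v, (0 : StrongDual ℝ E)) + ((0 : E), vs) := by
    simp
  rw [hsplit, map_add, hvy]
  rfl
/-- For any continuous functional `f`, `sup_v (f v - ‖v‖²/2) ≥ ‖f‖²/2` approximately. -/
lemma dual_sup [Nontrivial E] (f : StrongDual ℝ E) {ε : ℝ} (hε : 0 < ε) :
    ∃ v : E, ‖f‖ ^ 2 / 2 - ε ≤ f v - ‖v‖ ^ 2 / 2 := by
  rcases eq_or_lt_of_le (norm_nonneg f) with hf0 | hfpos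
  · refine ⟨0, ?_⟩
    rw [map_zero, norm_zero, ← hf0]
    norm_num
    linarith
  · set c : ℝ := ‖f‖ - ε / ‖f‖ with hc
    have hclt : c < ‖f‖ := by
      have : 0 < ε / ‖f‖ := div_pos hε hfpos
      rw [hc]; linarith
    have hz : ∃ z : E, ‖z‖ = 1 ∧ c < f z := by
      by_contra hcon
      push_neg at hcon
      have habs : ∀ z : E, ‖z‖ = 1 → ‖f z‖ ≤ c := by
        intro z hz1
        have p1 := hcon z hz1
        have p2 := hcon (-z) (by rwa [norm_neg])
        rw [map_neg] at p2
        rw [Real.norm_eq_abs, abs_le]; constructor <;> linarith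
      have hcnn : 0 ≤ c := by
        obtain ⟨z, hz1⟩ := exists_norm_eq E zero_le_one
        have p1 := hcon z hz1
        have p2 := hcon (-z) (by rwa [norm_neg])
        rw [map_neg] at p2
        linarith
      have := ContinuousLinearMap.opNorm_le_of_unit_norm hcnn habs
      linarith
    obtain ⟨z, hz1, hz2⟩ := hz
    refine ⟨‖f‖ • z, ?_⟩
    have e1 : f (‖f‖ • z) = ‖f‖ * f z := by rw [map_smul, smul_eq_mul]
    have e2 : ‖(‖f‖ • z : E)‖ = ‖f‖ := by
      rw [norm_smul, Real.norm_eq_abs, abs_of_nonneg (norm_nonneg f), hz1, mul_one]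
    rw [e1, e2]
    have : ‖f‖ * c ≤ ‖f‖ * f z := mul_le_mul_of_nonneg_left hz2.le (norm_nonneg f)
    have hcc : ‖f‖ * c = ‖f‖ ^ 2 - ε := by
      rw [hc]; field_simp
    nlinarith
/-- The core of Rockafellar's surjectivity theorem: any maximally monotone subset of
`E × E*` meets `G(-J)`. -/
lemma main_exists [Nontrivial E] (hrefl : ReflexiveSp E)
    {A : Set (E × StrongDual ℝ E)} (hA : MaxMono A) :
    ∃ b ∈ A, ‖b.1‖ ^ 2 / 2 + ‖b.2‖ ^ 2 / 2 = -(b.2 b.1) := by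
  obtain ⟨g, hg⟩ := exists_linear_le_pF hA
  obtain ⟨yst, y, hgr⟩ := g_repr hA hrefl hg
  obtain ⟨⟨a₀, h₀⟩, hm, hmax⟩ := id hA
  -- the key inequality from `g ≤ p`
  have key : ∀ a ∈ A, ∀ v : E, ∀ vs : StrongDual ℝ E,
      yst v + vs y - (‖v‖ ^ 2 / 2 + ‖vs‖ ^ 2 / 2) ≤ yst a.1 + a.2 y + a.2 a.1 := by
    intro a ha v vs
    have h1 := le_trans (hg ((v, vs) - a)) (pF_sub_le hm h₀ ha (v, vs))
    rw [map_sub] at h1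
    have h2 : g (v, vs) = yst v + vs y := hgr v vs
    have h3 : g a = yst a.1 + a.2 y := by
      have : a = (a.1, a.2) := rfl
      rw [this, hgr]
    have h4 : hB ((v : E), (vs : StrongDual ℝ E)) = ‖v‖ ^ 2 / 2 + ‖vs‖ ^ 2 / 2 := rfl
    rw [h2, h3] at h1
    rw [h4] at h1
    linarith
  -- the dagger inequality
  have hdag : ∀ a ∈ A, ‖y‖ ^ 2 / 2 + ‖yst‖ ^ 2 / 2 ≤ yst a.1 + a.2 y + a.2 a.1 := by
    intro a ha
    refine my_le_of_forall_pos fun ε hε => ?_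
    obtain ⟨v, hv⟩ := dual_sup yst hε
    obtain ⟨ws, hws1, hws2⟩ := exists_dual_vector' ℝ y
    have hws2' : ws y = ‖y‖ := by exact_mod_cast hws2
    set vs : StrongDual ℝ E := ‖y‖ • ws with hvs
    have e1 : vs y = ‖y‖ ^ 2 := by
      rw [hvs, ContinuousLinearMap.smul_apply, hws2', smul_eq_mul]; ring
    have e2 : ‖vs‖ = ‖y‖ := by
      rw [hvs, norm_smul, Real.norm_eq_abs, abs_of_nonneg (norm_nonneg y), hws1, mul_one]
    have := key a ha v vs
    rw [e1, e2] at this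
    linarith
  -- the reverse bound
  have hrev : -(‖y‖ ^ 2 / 2 + ‖yst‖ ^ 2 / 2) ≤ yst y := by
    have := q_ge ((y : E), (yst : StrongDual ℝ E))
    unfold hB at this
    exact this
  -- the candidate point
  set b₀ : E × StrongDual ℝ E := (-y, -yst) with hb₀def
  have hquad : ∀ a ∈ A, 0 ≤ (b₀.2 - a.2) (b₀.1 - a.1) := by
    intro a ha
    have hd := hdag a ha
    simp only [hb₀def, ContinuousLinearMap.sub_apply, map_sub, ContinuousLinearMap.neg_apply,
      map_neg, neg_neg]
    linarith
  have hb₀ : b₀ ∈ A := by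
    have hC : MonoSet (insert b₀ A) := by
      intro p hp q hq
      rcases Set.mem_insert_iff.mp hp with rfl | hp' <;>
        rcases Set.mem_insert_iff.mp hq with rfl | hq'
      · simp
      · exact hquad q hq'
      · have := hquad p hp'
        simp only [ContinuousLinearMap.sub_apply, map_sub] at this ⊢
        linarith
      · exact hm p hp' q hq'
    have := hmax (insert b₀ A) hC (Set.subset_insert _ _)
    rw [← this]; exact Set.mem_insert _ _
  have hfin := hdag b₀ hb₀
  have e3 : yst b₀.1 + b₀.2 y + b₀.2 b₀.1 = -(yst y) := by
    simp only [hb₀def, ContinuousLinearMap.neg_apply, map_neg, neg_neg]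
    ring
  rw [e3] at hfin
  refine ⟨b₀, hb₀, ?_⟩
  have e4 : ‖b₀.1‖ = ‖y‖ := by simp [hb₀def]
  have e5 : ‖b₀.2‖ = ‖yst‖ := by simp [hb₀def]
  have e6 : b₀.2 b₀.1 = yst y := by
    simp [hb₀def]
  rw [e4, e5, e6]
  linarith
/-- Translating a maximally monotone set in the second coordinate stays maximally monotone. -/
lemma maxMono_translate {A : Set (E × StrongDual ℝ E)} (hA : MaxMono A) (w : StrongDual ℝ E) :
    MaxMono ((fun p : E × StrongDual ℝ E => (p.1, p.2 - w)) '' A) := by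
  obtain ⟨hne, hm, hmax⟩ := hA
  refine ⟨hne.image _, ?_, ?_⟩
  · rintro _ ⟨p₀, hp₀, rfl⟩ _ ⟨r₀, hr₀, rfl⟩
    have := hm p₀ hp₀ r₀ hr₀
    simpa [sub_sub_sub_cancel_right] using this
  · intro C hC hsub
    set C' : Set (E × StrongDual ℝ E) := (fun p : E × StrongDual ℝ E => (p.1, p.2 + w)) '' C with hC'def
    have hC'mono : MonoSet C' := by
      rintro _ ⟨p₀, hp₀, rfl⟩ _ ⟨r₀, hr₀, rfl⟩
      have := hC p₀ hp₀ r₀ hr₀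
      simpa [add_sub_add_right_eq_sub] using this
    have hAC' : A ⊆ C' := by
      intro a ha
      have h1 : (a.1, a.2 - w) ∈ C := hsub ⟨a, ha, rfl⟩
      exact ⟨(a.1, a.2 - w), h1, by simp⟩
    have hC'A : C' = A := hmax C' hC'mono hAC'
    apply Set.Subset.antisymm _ hsub
    intro c hc
    have h1 : (c.1, c.2 + w) ∈ C' := ⟨c, hc, rfl⟩
    rw [hC'A] at h1
    exact ⟨(c.1, c.2 + w), h1, by simp⟩

end S16

/-- Rockafellar's surjectivity theorem.  If `E` is a nonzero reflexive
Banach space and `S : E ⇉ E*` is maximally monotone, then `(S + J)(E) = E*`. -/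
theorem stmt16 [CompleteSpace E] [Nontrivial E] (hrefl : ReflexiveSp E)
    (S : E → Set (StrongDual ℝ E)) (hS : MaxMonoOp S) :
    ∀ ystar : StrongDual ℝ E, ∃ x : E, ∃ s ∈ S x, ∃ j : StrongDual ℝ E,
      (1 / 2) * ‖x‖ ^ 2 + (1 / 2) * ‖j‖ ^ 2 = j x ∧ ystar = s + j := by
  intro ystar
  have hA' := S16.maxMono_translate hS ystar
  obtain ⟨b, hb, heq⟩ := S16.main_exists hrefl hA'
  obtain ⟨a, ha, hab⟩ := hb
  refine ⟨a.1, a.2, ha, -b.2, ?_, ?_⟩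
  · have h1 : ‖(-b.2 : StrongDual ℝ E)‖ = ‖b.2‖ := norm_neg _
    have h2 : (-b.2 : StrongDual ℝ E) a.1 = -(b.2 b.1) := by
      rw [← hab]
      simp
    have h3 : ‖a.1‖ = ‖b.1‖ := by rw [← hab]
    rw [h1, h2, h3]
    linarith
  · have h4 : b.2 = a.2 - ystar := by rw [← hab]
    rw [h4]
    abel
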